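/- Let P be an irreducible stochastic matrix with stationary vector π, and let t, u be vectors. Then I − P + tuᵀ is nonsingular if and only if πᵀt ≠ 0 and uᵀe ≠ 0. -/

import Mathlib

open Matrix BigOperators

/-- `P` is a (row) stochastic matrix. -/
def IsStochastic {m : ℕ} (P : Matrix (Fin m) (Fin m) ℝ) : Prop :=
  (∀ i j, 0 ≤ P i j) ∧ ∀ i, ∑ j, P i j = 1

/-- `P` is irreducible: any state leads to any other in some positive number of steps. -/
def IsIrred {m : ℕ} (P : Matrix (Fin m) (Fin m) ℝ) : Prop :=
  ∀ i j, ∃ n : ℕ, 1 ≤ n ∧ 0 < (P ^ n) i j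

lemma pow_entries_nonneg {m : ℕ} (P : Matrix (Fin m) (Fin m) ℝ) (hP : IsStochastic P)
    (n : ℕ) : ∀ i j, 0 ≤ (P ^ n) i j := by
  induction n with
  | zero => intro i j; simp [Matrix.one_apply]; positivity
  | succ n ih =>
    intro i j
    rw [pow_succ, Matrix.mul_apply]
    exact Finset.sum_nonneg fun k _ => mul_nonneg (ih i k) (hP.1 k j)

lemma mulVec_one {m : ℕ} (P : Matrix (Fin m) (Fin m) ℝ) (hP : IsStochastic P) :
    P *ᵥ (fun _ => (1:ℝ)) = fun _ => 1 := by
  funext i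
  simp [Matrix.mulVec, dotProduct, hP.2 i]

lemma pow_mulVec_fixed {m : ℕ} (P : Matrix (Fin m) (Fin m) ℝ) (x : Fin m → ℝ)
    (hx : P *ᵥ x = x) (n : ℕ) : (P ^ n) *ᵥ x = x := by
  induction n with
  | zero => simp
  | succ n ih => rw [pow_succ, ← Matrix.mulVec_mulVec, hx, ih]

lemma pow_row_sum {m : ℕ} (P : Matrix (Fin m) (Fin m) ℝ) (hP : IsStochastic P)
    (n : ℕ) (i : Fin m) : ∑ j, (P ^ n) i j = 1 := by
  have h := pow_mulVec_fixed P (fun _ => (1:ℝ)) (mulVec_one P hP) n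
  have := congrFun h i
  simpa [Matrix.mulVec, dotProduct] using this

/-- Max principle: a fixed vector of an irreducible stochastic matrix is constant. -/
lemma fixed_is_const {m : ℕ} (hm : 0 < m) (P : Matrix (Fin m) (Fin m) ℝ)
    (hP : IsStochastic P) (hirr : IsIrred P) (x : Fin m → ℝ) (hx : P *ᵥ x = x) :
    ∃ c, ∀ j, x j = c := by
  haveI : Nonempty (Fin m) := ⟨⟨0, hm⟩⟩
  obtain ⟨i0, -, hmax⟩ := Finset.exists_max_image Finset.univ x ⟨Classical.arbitrary _, Finset.mem_univ _⟩
  refine ⟨x i0, fun j => ?_⟩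
  obtain ⟨n, hn1, hpos⟩ := hirr i0 j
  have hQx : (P ^ n) *ᵥ x = x := pow_mulVec_fixed P x hx n
  have hxi0 : ∑ k, (P ^ n) i0 k * x k = x i0 := by
    have := congrFun hQx i0
    simpa [Matrix.mulVec, dotProduct] using this
  have hsum0 : ∑ k, (P ^ n) i0 k * (x i0 - x k) = 0 := by
    have : ∑ k, (P ^ n) i0 k * (x i0 - x k)
        = (∑ k, (P ^ n) i0 k) * x i0 - ∑ k, (P ^ n) i0 k * x k := by
      rw [Finset.sum_mul, ← Finset.sum_sub_distrib]; ring_nf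
      exact Finset.sum_congr rfl fun k _ => by ring
    rw [this, pow_row_sum P hP n i0, hxi0]; ring
  have hterm : ∀ k ∈ Finset.univ, 0 ≤ (P ^ n) i0 k * (x i0 - x k) := fun k _ =>
    mul_nonneg (pow_entries_nonneg P hP n i0 k) (sub_nonneg.mpr (hmax k (Finset.mem_univ k)))
  have hj := (Finset.sum_eq_zero_iff_of_nonneg hterm).mp hsum0 j (Finset.mem_univ j)
  have : x i0 - x j = 0 := by
    rcases mul_eq_zero.mp hj with h | h
    · exact absurd h (ne_of_gt hpos)
    · exact h
  linarith

lemma mulVec_vecMulVec {m : ℕ} (t u v : Fin m → ℝ) :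
    Matrix.vecMulVec t u *ᵥ v = (u ⬝ᵥ v) • t := by
  funext i
  simp [Matrix.mulVec, Matrix.vecMulVec, dotProduct, Finset.mul_sum, Finset.sum_mul]
  ring_nf

lemma vecMul_vecMulVec {m : ℕ} (t u v : Fin m → ℝ) :
    Matrix.vecMul v (Matrix.vecMulVec t u) = (v ⬝ᵥ t) • u := by
  funext j
  simp [Matrix.vecMul, Matrix.vecMulVec, dotProduct, Finset.sum_mul]
  exact Finset.sum_congr rfl fun k _ => by ring

/-- `I - P + t uᵀ` is nonsingular iff `πᵀ t ≠ 0` and `uᵀ e ≠ 0`. -/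
theorem nonsingular_iff {m : ℕ} (hm : 0 < m)
    (P : Matrix (Fin m) (Fin m) ℝ) (hP : IsStochastic P) (hirr : IsIrred P)
    (π : Fin m → ℝ) (hπpos : ∀ i, 0 < π i)
    (hπ : Matrix.vecMul π P = π) (hπsum : ∑ i, π i = 1)
    (t u : Fin m → ℝ) :
    IsUnit (1 - P + Matrix.vecMulVec t u) ↔
      (π ⬝ᵥ t ≠ 0 ∧ u ⬝ᵥ (fun _ => (1 : ℝ)) ≠ 0) := by
  set M := 1 - P + Matrix.vecMulVec t u with hM
  have hvecMulM : ∀ v : Fin m → ℝ, Matrix.vecMul v M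
      = Matrix.vecMul v (1 - P) + (v ⬝ᵥ t) • u := by
    intro v
    rw [hM, Matrix.vecMul_add, vecMul_vecMulVec]
  have hmulVecM : ∀ v : Fin m → ℝ, M *ᵥ v
      = (1 - P) *ᵥ v + (u ⬝ᵥ v) • t := by
    intro v
    rw [hM, Matrix.add_mulVec, mulVec_vecMulVec]
  have hπIP : Matrix.vecMul π (1 - P) = 0 := by
    rw [Matrix.vecMul_sub, Matrix.vecMul_one, hπ, sub_self]
  have he : (1 - P) *ᵥ (fun _ => (1:ℝ)) = 0 := by
    rw [Matrix.sub_mulVec, Matrix.one_mulVec, mulVec_one P hP, sub_self]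
  constructor
  · intro hunit
    have hdet : M.det ≠ 0 := by
      intro h
      rw [Matrix.isUnit_iff_isUnit_det, h] at hunit
      simpa using hunit
    constructor
    · intro h0
      have : Matrix.vecMul π M = 0 := by
        rw [hvecMulM, hπIP, h0, zero_smul, add_zero]
      have hπne : π ≠ 0 := by
        intro h
        have := hπpos ⟨0, hm⟩
        rw [h] at this; simpa using this
      exact hdet (Matrix.exists_vecMul_eq_zero_iff.mp ⟨π, hπne, this⟩)
    · intro h0
      have : M *ᵥ (fun _ => (1:ℝ)) = 0 := by
        rw [hmulVecM, he, h0, zero_smul, add_zero]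
      have hene : (fun _ => (1:ℝ)) ≠ (0 : Fin m → ℝ) := by
        intro h
        have := congrFun h ⟨0, hm⟩
        simpa using this
      exact hdet (Matrix.exists_mulVec_eq_zero_iff.mp ⟨_, hene, this⟩)
  · rintro ⟨ht, hu⟩
    rw [Matrix.isUnit_iff_isUnit_det, isUnit_iff_ne_zero]
    intro hdet
    obtain ⟨v, hv, hMv⟩ := Matrix.exists_mulVec_eq_zero_iff.mpr hdet
    have huv : u ⬝ᵥ v = 0 := by
      have h1 : π ⬝ᵥ (M *ᵥ v) = 0 := by rw [hMv]; simp
      have h2 : π ⬝ᵥ (M *ᵥ v) = (Matrix.vecMul π M) ⬝ᵥ v := by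
        rw [dotProduct_mulVec]
      rw [h2, hvecMulM, hπIP, zero_add, smul_dotProduct] at h1
      have : (π ⬝ᵥ t) * (u ⬝ᵥ v) = 0 := by simpa [smul_eq_mul] using h1
      rcases mul_eq_zero.mp this with h | h
      · exact absurd h ht
      · exact h
    have hIPv : (1 - P) *ᵥ v = 0 := by
      have := hMv
      rw [hmulVecM, huv, zero_smul, add_zero] at this
      exact this
    have hPv : P *ᵥ v = v := by
      rw [Matrix.sub_mulVec, Matrix.one_mulVec] at hIPv
      exact (sub_eq_zero.mp hIPv).symm
    obtain ⟨c, hc⟩ := fixed_is_const hm P hP hirr v hPv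
    have hvconst : v = fun _ => c := funext hc
    have : c * (u ⬝ᵥ (fun _ => (1:ℝ))) = 0 := by
      rw [hvconst] at huv
      rw [← huv]
      simp [dotProduct, Finset.mul_sum]
      exact Finset.sum_congr rfl fun k _ => by ring
    rcases mul_eq_zero.mp this with h | h
    · apply hv
      rw [hvconst, h]; funext i; rfl
    · exact hu h
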